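/- Matrix speed relation: assume 0 ≤ α < m, X has full rank m ≥ 2, and w* ∈ Ω is a global maximizer of det M(w) over Ω̄ with all coordinates positive. Then the n×n identity matrix I satisfies I − R(α) = (m/(m − α))·(I − R(0)), where R(α) is the Jacobian of T_α at w*. -/

import Mathlib

open Matrix Filter

/-- The information matrix `M(w) = ∑ i, w_i x_i x_iᵀ`. -/
noncomputable def Mmat {n m : ℕ} (x : Fin n → Fin m → ℝ) (w : Fin n → ℝ) :
    Matrix (Fin m) (Fin m) ℝ :=
  ∑ i, w i • Matrix.vecMulVec (x i) (x i)

/-- The multiplicative update map `T_α(w)_i = w_i (x_iᵀ M(w)⁻¹ x_i − α)/(m − α)`. -/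
noncomputable def Talg {n m : ℕ} (x : Fin n → Fin m → ℝ) (α : ℝ) (w : Fin n → ℝ) :
    Fin n → ℝ :=
  fun i => w i * ((x i ⬝ᵥ (Mmat x w)⁻¹ *ᵥ x i) - α) / ((m : ℝ) - α)

/-- Matrix speed relation: if `0 ≤ α < m`, the design matrix has full rank `m ≥ 2`, and `w*`
is an interior global maximizer of `det M` over the closed simplex, then
`I − R(α) = (m/(m−α))·(I − R(0))`, where `R(α)` is the Jacobian of `T_α` at `w*`. -/
theorem stmt_6 {n m : ℕ} (hm : 2 ≤ m) (hnm : m ≤ n)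
    (x : Fin n → Fin m → ℝ) (hrank : (Matrix.of x).rank = m)
    (α : ℝ) (hα0 : 0 ≤ α) (hαm : α < m)
    (wstar : Fin n → ℝ) (hpos : ∀ i, 0 < wstar i) (hsum : ∑ i, wstar i = 1)
    (hopt : ∀ v : Fin n → ℝ, (∀ i, 0 ≤ v i) → ∑ i, v i = 1 →
      (Mmat x v).det ≤ (Mmat x wstar).det)
    (Rα R0 : Matrix (Fin n) (Fin n) ℝ)
    (hRα : HasFDerivAt (Talg x α)
      (LinearMap.toContinuousLinearMap (Matrix.toLin' Rα)) wstar)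
    (hR0 : HasFDerivAt (Talg x 0)
      (LinearMap.toContinuousLinearMap (Matrix.toLin' R0)) wstar) :
    (1 : Matrix (Fin n) (Fin n) ℝ) - Rα =
      ((m : ℝ) / ((m : ℝ) - α)) • ((1 : Matrix (Fin n) (Fin n) ℝ) - R0) := by
  have hm0 : (m : ℝ) ≠ 0 := by positivity
  have hma : (m : ℝ) - α ≠ 0 := ne_of_gt (sub_pos.mpr hαm)
  set c : ℝ := (m : ℝ) / ((m : ℝ) - α) with hc
  set c' : ℝ := α / ((m : ℝ) - α) with hc'
  have hfun : Talg x α = fun w => c • Talg x (0:ℝ) w - c' • w := by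
    funext w i
    simp only [Talg, Pi.sub_apply, Pi.smul_apply, smul_eq_mul, sub_zero, hc, hc']
    field_simp
  have hderiv : HasFDerivAt (Talg x α)
      (c • LinearMap.toContinuousLinearMap (Matrix.toLin' R0)
        - c' • ContinuousLinearMap.id ℝ (Fin n → ℝ)) wstar := by
    rw [hfun]
    exact (hR0.const_smul c).sub ((hasFDerivAt_id wstar).const_smul c')
  have huniq := hRα.unique hderiv
  have hmat : Rα = c • R0 - c' • (1 : Matrix (Fin n) (Fin n) ℝ) := by
    ext i j
    have h2 := congrFun (congrArg
      (fun L : (Fin n → ℝ) →L[ℝ] (Fin n → ℝ) => L (Pi.single j 1)) huniq) i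
    simp only [LinearMap.coe_toContinuousLinearMap', Matrix.toLin'_apply,
      ContinuousLinearMap.coe_sub', Pi.sub_apply, ContinuousLinearMap.coe_smul',
      Pi.smul_apply, ContinuousLinearMap.coe_id', id_eq, smul_eq_mul,
      Matrix.mulVec_single, mul_one, Pi.single_apply] at h2
    by_cases hij : i = j <;>
      simp [Matrix.sub_apply, Matrix.smul_apply, Matrix.one_apply, hij,
        smul_eq_mul, hij] at h2 ⊢ <;> linarith
  have hcc : (1 : ℝ) + c' = c := by
    rw [hc, hc']; field_simp; ring
  rw [hmat]
  ext i j
  by_cases hij : i = j <;>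
    simp [Matrix.sub_apply, Matrix.smul_apply, Matrix.one_apply, hij, smul_eq_mul] <;>
    nlinarith [hcc]
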